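/- Let (X, dist) be a metric space, μ a Borel measure on X, and T : X → X a bijective isometry that preserves μ (the pushforward of μ under T equals μ). Let p ∈ X satisfy dist(p, T p) ≤ 1, and let F ⊆ X be a Borel set such that μ(Tⁱ(F) ∩ F) = 0 for every integer i ≥ 1, where Tⁱ denotes the i-th iterate of T. Then for every real number t ≥ 2: μ(B_t(p)) ≥ ⌊t/2⌋ · μ(F ∩ B_{t/2}(p)), where B_r(p) denotes the open ball of radius r around p. -/

import Mathlib

open MeasureTheory Metric

/-- **Volume growth from an isometric `ℤ`-action with an essentially disjoint
fundamental set.**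
Let `T` be a measure-preserving bijective isometry of a metric measure space
`(X, dist, μ)`, let `p` be a point displaced by at most `1`, and let `F` be a Borel
set meeting each of its forward iterates `Tⁱ(F)`, `i ≥ 1`, in measure zero.  Then
for every `t ≥ 2` one has `μ(B_t(p)) ≥ ⌊t/2⌋ · μ(B_{t/2}(p))`. -/
theorem measure_ball_ge_floor_mul_of_isometry
    {X : Type*} [MetricSpace X] [MeasurableSpace X] [BorelSpace X]
    (μ : Measure X) (T : X → X)
    (hTiso : Isometry T) (hTbij : Function.Bijective T)
    (hTμ : Measure.map T μ = μ)
    (p : X) (hp : dist p (T p) ≤ 1)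
    (F : Set X) (hF : MeasurableSet F)
    (hdisj : ∀ i : ℕ, 1 ≤ i → μ ((T^[i]) '' F ∩ F) = 0) :
    ∀ t : ℝ, 2 ≤ t →
      (⌊t / 2⌋₊ : ENNReal) * μ (F ∩ ball p (t / 2)) ≤ μ (ball p t) := by
  intro t ht
  -- `T` as a measurable equiv
  let eI : X ≃ᵢ X := ⟨Equiv.ofBijective T hTbij, hTiso⟩
  let e : X ≃ᵐ X := eI.toHomeomorph.toMeasurableEquiv
  have heT : (e : X → X) = T := rfl
  have hmap_symm : μ.map e.symm = μ := by
    have h1 : μ.map e = μ := by rw [show (e : X → X) = T from rfl]; exact hTμ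
    calc μ.map e.symm = (μ.map e).map e.symm := by rw [h1]
      _ = μ.map (e.symm ∘ e) :=
        Measure.map_map e.symm.measurable e.measurable
      _ = μ := by
        simp [MeasurableEquiv.symm_comp_self]
  have himg1 : ∀ S : Set X, μ (T '' S) = μ S := by
    intro S
    have h1 : T '' S = e.symm ⁻¹' S := by
      rw [← heT, ← MeasurableEquiv.image_eq_preimage_symm]
    rw [h1, ← MeasurableEquiv.map_apply e.symm, hmap_symm]
  have himg : ∀ (i : ℕ) (S : Set X), μ (T^[i] '' S) = μ S := by
    intro i
    induction i with
    | zero => simp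
    | succ k ih =>
      intro S
      rw [Function.iterate_succ', Set.image_comp, himg1, ih]
  have hmeas1 : ∀ S : Set X, MeasurableSet S → MeasurableSet (T '' S) := by
    intro S hS
    have h1 : T '' S = e.symm ⁻¹' S := by
      rw [← heT, ← MeasurableEquiv.image_eq_preimage_symm]
    rw [h1]; exact e.symm.measurable hS
  set n : ℕ := ⌊t / 2⌋₊ with hn
  set A : Set X := F ∩ ball p (t / 2) with hA
  have hAmeas : MeasurableSet A := hF.inter measurableSet_ball
  have hmeasIter : ∀ i : ℕ, MeasurableSet (T^[i] '' A) := by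
    intro i
    induction i with
    | zero => simpa using hAmeas
    | succ k ih =>
      rw [Function.iterate_succ', Set.image_comp]
      exact hmeas1 _ ih
  have hiso : ∀ i : ℕ, Isometry (T^[i]) := by
    intro i
    induction i with
    | zero => exact isometry_id
    | succ k ih =>
      rw [Function.iterate_succ']
      exact hTiso.comp ih
  -- displacement bound
  have hdisp : ∀ i : ℕ, dist (T^[i] p) p ≤ i := by
    intro i
    induction i with
    | zero => simp
    | succ k ih =>
      have h1 : T^[k+1] p = T^[k] (T p) := by
        rw [Function.iterate_succ, Function.comp_apply]
      calc dist (T^[k+1] p) p ≤ dist (T^[k+1] p) (T^[k] p) + dist (T^[k] p) p :=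
            dist_triangle _ _ _
        _ ≤ 1 + k := by
            refine add_le_add ?_ ih
            rw [h1, (hiso k).dist_eq, dist_comm]
            exact hp
        _ = (k + 1 : ℕ) := by push_cast; ring
  -- the translates lie in the big ball
  have hsub : ∀ i ∈ Finset.Icc 1 n, T^[i] '' A ⊆ ball p t := by
    intro i hi x hx
    obtain ⟨y, hy, rfl⟩ := hx
    have hyb : dist y p < t / 2 := hy.2
    have hin : (i : ℝ) ≤ t / 2 := by
      have := Finset.mem_Icc.mp hi
      exact le_trans (Nat.cast_le.mpr this.2) (Nat.floor_le (by linarith))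
    calc dist (T^[i] y) p ≤ dist (T^[i] y) (T^[i] p) + dist (T^[i] p) p :=
          dist_triangle _ _ _
      _ < t / 2 + t / 2 := by
          apply add_lt_add_of_lt_of_le
          · rwa [(hiso i).dist_eq]
          · linarith [hdisp i]
      _ = t := by ring
  -- a.e. disjointness
  have key : ∀ i j : ℕ, i < j → μ (T^[i] '' A ∩ T^[j] '' A) = 0 := by
    intro i j hij
    have hinj : Function.Injective (T^[i]) := (hTbij.injective).iterate i
    have hj : T^[j] '' A = T^[i] '' (T^[j - i] '' A) := by
      rw [← Set.image_comp, ← Function.iterate_add, Nat.add_sub_cancel' hij.le]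
    rw [hj, ← Set.image_inter hinj, himg]
    refine measure_mono_null (fun x hx => ?_) (hdisj (j - i) (by omega))
    exact ⟨Set.image_mono Set.inter_subset_left hx.2, hx.1.1⟩
  have hpair : (↑(Finset.Icc 1 n) : Set ℕ).Pairwise
      (Function.onFun (AEDisjoint μ) fun i => T^[i] '' A) := by
    intro i _ j _ hij
    rcases lt_or_gt_of_ne hij with h | h
    · exact key i j h
    · exact AEDisjoint.symm (key j i h)
  have hunion : μ (⋃ i ∈ Finset.Icc 1 n, T^[i] '' A)
      = ∑ i ∈ Finset.Icc 1 n, μ (T^[i] '' A) :=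
    measure_biUnion_finset₀ hpair fun i _ => (hmeasIter i).nullMeasurableSet
  calc (n : ENNReal) * μ A = ∑ i ∈ Finset.Icc 1 n, μ (T^[i] '' A) := by
        simp only [himg]
        rw [Finset.sum_const, Nat.card_Icc, nsmul_eq_mul]
        norm_num
    _ = μ (⋃ i ∈ Finset.Icc 1 n, T^[i] '' A) := hunion.symm
    _ ≤ μ (ball p t) := by
        refine measure_mono ?_
        exact Set.iUnion₂_subset hsub
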